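/- If p is a polynomial of degree ≤ 2 on ℝ² whose averages over all three edges of a nondegenerate triangle vanish, then p = Σₖ p(vₖ) φₖ, where φₖ = λₖ(1 - 3λ_{k+1} - 3λ_{k+2}). -/
import Mathlib

open MeasureTheory

open MvPolynomial in
lemma quad_eval_aux (p : MvPolynomial (Fin 2) ℝ) (hp : p.totalDegree ≤ 2) :
    ∃ g0 g1 g2 g3 g4 g5 : ℝ, ∀ x : Fin 2 → ℝ,
      MvPolynomial.eval x p =
        g0 + g1 * x 0 + g2 * x 1 + g3 * x 0 ^ 2 + g4 * (x 0 * x 1) + g5 * x 1 ^ 2 := by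
  classical
  set e : ℕ → ℕ → (Fin 2 →₀ ℕ) := fun a b => Finsupp.single 0 a + Finsupp.single 1 b with he
  have he0 : ∀ a b, e a b 0 = a := by intro a b; simp [he, Finsupp.single_apply]
  have he1 : ∀ a b, e a b 1 = b := by intro a b; simp [he, Finsupp.single_apply]
  have hrepr : ∀ d : Fin 2 →₀ ℕ, d = e (d 0) (d 1) := by
    intro d; ext i; fin_cases i <;> simp [he, Finsupp.single_apply]
  have hdeg : ∀ d ∈ p.support, d 0 + d 1 ≤ 2 := by
    intro d hd
    have h1 : (d.sum fun _ n => n) ≤ 2 := le_trans (MvPolynomial.le_totalDegree hd) hp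
    have h2 : (d.sum fun _ n => n) = d 0 + d 1 := by
      rw [Finsupp.sum_fintype]
      · exact Fin.sum_univ_two _
      · intro; rfl
    omega
  have hcoeff0 : ∀ a b : ℕ, 2 < a + b → MvPolynomial.coeff (e a b) p = 0 := by
    intro a b hab
    by_contra h
    have := hdeg _ (MvPolynomial.mem_support_iff.2 h)
    rw [he0, he1] at this; omega
  have key : ∀ x : Fin 2 → ℝ, MvPolynomial.eval x p =
      ∑ ab ∈ Finset.range 3 ×ˢ Finset.range 3,
        MvPolynomial.coeff (e ab.1 ab.2) p * x 0 ^ ab.1 * x 1 ^ ab.2 := by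
    intro x
    rw [MvPolynomial.eval_eq']
    have hsub : p.support ⊆ (Finset.range 3 ×ˢ Finset.range 3).image
        (fun ab : ℕ × ℕ => e ab.1 ab.2) := by
      intro d hd
      refine Finset.mem_image.2 ⟨(d 0, d 1), ?_, (hrepr d).symm⟩
      have := hdeg d hd
      simp only [Finset.mem_product, Finset.mem_range]
      omega
    rw [Finset.sum_subset hsub (fun d _ hds => by
      simp [MvPolynomial.notMem_support_iff.1 hds])]
    rw [Finset.sum_image (fun a _ b _ h => by
      have h0 := congrArg (fun f : Fin 2 →₀ ℕ => f 0) h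
      have h1 := congrArg (fun f : Fin 2 →₀ ℕ => f 1) h
      simp only [he0, he1] at h0 h1
      exact Prod.ext h0 h1)]
    refine Finset.sum_congr rfl fun ab _ => ?_
    rw [Fin.prod_univ_two, he0, he1, mul_assoc]
  refine ⟨MvPolynomial.coeff (e 0 0) p, MvPolynomial.coeff (e 1 0) p,
      MvPolynomial.coeff (e 0 1) p, MvPolynomial.coeff (e 2 0) p,
      MvPolynomial.coeff (e 1 1) p, MvPolynomial.coeff (e 0 2) p, fun x => ?_⟩
  rw [key x]
  have z21 := hcoeff0 2 1 (by omega)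
  have z12 := hcoeff0 1 2 (by omega)
  have z22 := hcoeff0 2 2 (by omega)
  rw [Finset.sum_product]
  simp only [Finset.sum_range_succ, Finset.sum_range_zero, z21, z12, z22]
  ring

lemma quad_affine (p : MvPolynomial (Fin 2) ℝ) (hp : p.totalDegree ≤ 2)
    (w u z : Fin 2 → ℝ) :
    ∃ a b c d e f : ℝ, ∀ s t : ℝ,
      MvPolynomial.eval (w + s • u + t • z) p =
        a + b * s + c * t + d * s ^ 2 + e * (s * t) + f * t ^ 2 := by
  obtain ⟨g0, g1, g2, g3, g4, g5, hg⟩ := quad_eval_aux p hp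
  refine ⟨g0 + g1 * w 0 + g2 * w 1 + g3 * w 0 ^ 2 + g4 * (w 0 * w 1) + g5 * w 1 ^ 2,
    g1 * u 0 + g2 * u 1 + 2 * g3 * w 0 * u 0 + g4 * (w 0 * u 1 + u 0 * w 1)
      + 2 * g5 * w 1 * u 1,
    g1 * z 0 + g2 * z 1 + 2 * g3 * w 0 * z 0 + g4 * (w 0 * z 1 + z 0 * w 1)
      + 2 * g5 * w 1 * z 1,
    g3 * u 0 ^ 2 + g4 * (u 0 * u 1) + g5 * u 1 ^ 2,
    2 * g3 * u 0 * z 0 + g4 * (u 0 * z 1 + z 0 * u 1) + 2 * g5 * u 1 * z 1,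
    g3 * z 0 ^ 2 + g4 * (z 0 * z 1) + g5 * z 1 ^ 2, fun s t => ?_⟩
  rw [hg]
  simp only [Pi.add_apply, Pi.smul_apply, smul_eq_mul]
  ring

lemma integ_quad (a b c : ℝ) :
    (∫ t in (0:ℝ)..1, (a + b * t + c * t ^ 2)) = a + b / 2 + c / 3 := by
  have h1 : IntervalIntegrable (fun t : ℝ => a + b * t) volume 0 1 :=
    (by continuity : Continuous fun t : ℝ => a + b * t).intervalIntegrable 0 1
  have h2 : IntervalIntegrable (fun t : ℝ => c * t ^ 2) volume 0 1 :=
    (by continuity : Continuous fun t : ℝ => c * t ^ 2).intervalIntegrable 0 1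
  have h3 : IntervalIntegrable (fun t : ℝ => (a : ℝ)) volume 0 1 :=
    intervalIntegrable_const
  have h4 : IntervalIntegrable (fun t : ℝ => b * t) volume 0 1 :=
    (by continuity : Continuous fun t : ℝ => b * t).intervalIntegrable 0 1
  rw [intervalIntegral.integral_add h1 h2, intervalIntegral.integral_add h3 h4,
    intervalIntegral.integral_const, intervalIntegral.integral_const_mul,
    intervalIntegral.integral_const_mul, integral_id, integral_pow]
  norm_num
  ring

theorem vanishing_edge_averages_representation
    (v : Fin 3 → (Fin 2 → ℝ)) (lam : Fin 3 → ((Fin 2 → ℝ) →ᵃ[ℝ] ℝ))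
    (hv : AffineIndependent ℝ v)
    (hdelta : ∀ i j, lam i (v j) = if i = j then 1 else 0)
    (hsum : ∀ x, lam 0 x + lam 1 x + lam 2 x = 1)
    (p : MvPolynomial (Fin 2) ℝ) (hp : p.totalDegree ≤ 2)
    (hedge : ∀ j : Fin 3,
      (∫ t in (0:ℝ)..1,
        MvPolynomial.eval (t • v (j + 1) + (1 - t) • v (j + 2)) p) = 0) :
    ∀ x : Fin 2 → ℝ, MvPolynomial.eval x p =
      ∑ k : Fin 3, MvPolynomial.eval (v k) p *
        (lam k x * (1 - 3 * lam (k + 1) x - 3 * lam (k + 2) x)) := by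
  classical
  obtain ⟨a, b, c, d, e, f, hF⟩ := quad_affine p hp (v 0) (v 1 - v 0) (v 2 - v 0)
  -- edge relations
  -- edge j = 0 : path t • v 1 + (1-t) • v 2
  have R1 : a + b / 2 + c / 2 + d / 3 + e / 6 + f / 3 = 0 := by
    have h0 := hedge 0
    have hrw : ∀ t : ℝ, MvPolynomial.eval (t • v 1 + (1 - t) • v 2) p =
        (a + c + f) + (b - c + e - 2 * f) * t + (d - e + f) * t ^ 2 := by
      intro t
      have hpoint : t • v 1 + (1 - t) • v 2
          = v 0 + t • (v 1 - v 0) + (1 - t) • (v 2 - v 0) := by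
        funext i
        simp only [Pi.add_apply, Pi.sub_apply, Pi.smul_apply, smul_eq_mul]
        ring
      rw [hpoint, hF]; ring
    rw [show ((0:Fin 3) + 1) = 1 from rfl, show ((0:Fin 3) + 2) = 2 from rfl] at h0
    rw [intervalIntegral.integral_congr (g := fun t : ℝ =>
      (a + c + f) + (b - c + e - 2 * f) * t + (d - e + f) * t ^ 2)
      (fun t _ => hrw t), integ_quad] at h0
    linarith
  have R2 : a + c / 2 + f / 3 = 0 := by
    have h0 := hedge 1
    have hrw : ∀ t : ℝ, MvPolynomial.eval (t • v 2 + (1 - t) • v 0) p =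
        a + c * t + f * t ^ 2 := by
      intro t
      have hpoint : t • v 2 + (1 - t) • v 0
          = v 0 + (0:ℝ) • (v 1 - v 0) + t • (v 2 - v 0) := by
        funext i
        simp only [Pi.add_apply, Pi.sub_apply, Pi.smul_apply, smul_eq_mul]
        ring
      rw [hpoint, hF]; ring
    rw [show ((1:Fin 3) + 1) = 2 from rfl, show ((1:Fin 3) + 2) = 0 from rfl] at h0
    rw [intervalIntegral.integral_congr (g := fun t : ℝ => a + c * t + f * t ^ 2)
      (fun t _ => hrw t), integ_quad] at h0
    linarith
  have R3 : a + b / 2 + d / 3 = 0 := by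
    have h0 := hedge 2
    have hrw : ∀ t : ℝ, MvPolynomial.eval (t • v 0 + (1 - t) • v 1) p =
        (a + b + d) + (-b - 2 * d) * t + d * t ^ 2 := by
      intro t
      have hpoint : t • v 0 + (1 - t) • v 1
          = v 0 + (1 - t) • (v 1 - v 0) + (0:ℝ) • (v 2 - v 0) := by
        funext i
        simp only [Pi.add_apply, Pi.sub_apply, Pi.smul_apply, smul_eq_mul]
        ring
      rw [hpoint, hF]; ring
    rw [show ((2:Fin 3) + 1) = 0 from rfl, show ((2:Fin 3) + 2) = 1 from rfl] at h0
    rw [intervalIntegral.integral_congr (g := fun t : ℝ =>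
      (a + b + d) + (-b - 2 * d) * t + d * t ^ 2)
      (fun t _ => hrw t), integ_quad] at h0
    linarith
  -- vertex values
  have hv0 : MvPolynomial.eval (v 0) p = a := by
    have : v 0 = v 0 + (0:ℝ) • (v 1 - v 0) + (0:ℝ) • (v 2 - v 0) := by
      funext i; simp
    rw [this, hF]; ring
  have hv1 : MvPolynomial.eval (v 1) p = a + b + d := by
    have : v 1 = v 0 + (1:ℝ) • (v 1 - v 0) + (0:ℝ) • (v 2 - v 0) := by
      funext i; simp
    rw [this, hF]; ring
  have hv2 : MvPolynomial.eval (v 2) p = a + c + f := by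
    have : v 2 = v 0 + (0:ℝ) • (v 1 - v 0) + (1:ℝ) • (v 2 - v 0) := by
      funext i; simp
    rw [this, hF]; ring
  -- barycentric representation of an arbitrary point
  intro x
  have htop : affineSpan ℝ (Set.range v) = ⊤ := by
    rw [hv.affineSpan_eq_top_iff_card_eq_finrank_add_one]
    simp [Module.finrank_fintype_fun_eq_card]
  have hx : x ∈ affineSpan ℝ (Set.range v) := htop ▸ AffineSubspace.mem_top ℝ _ x
  obtain ⟨wts, hwts, hxw⟩ := eq_affineCombination_of_mem_affineSpan_of_fintype hx
  have hlam : ∀ j : Fin 3, lam j x = wts j := by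
    intro j
    rw [hxw, Finset.univ.map_affineCombination v wts hwts (lam j),
      Finset.affineCombination_eq_linear_combination _ _ _ hwts]
    simp [Function.comp, hdelta, Finset.sum_ite_eq]
  have hxpt : x = v 0 + (wts 1) • (v 1 - v 0) + (wts 2) • (v 2 - v 0) := by
    have hx2 : x = ∑ i : Fin 3, wts i • v i := by
      rw [hxw, Finset.affineCombination_eq_linear_combination _ _ _ hwts]
    have hw1 : wts 0 + wts 1 + wts 2 = 1 := by
      have := hwts
      rw [Fin.sum_univ_three] at this
      linarith
    funext i
    rw [hx2]
    simp only [Fin.sum_univ_three, Pi.add_apply, Pi.sub_apply, Pi.smul_apply, smul_eq_mul]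
    linear_combination (v 0 i) * hw1
  have hevalx : MvPolynomial.eval x p =
      a + b * wts 1 + c * wts 2 + d * (wts 1) ^ 2 + e * (wts 1 * wts 2) + f * (wts 2) ^ 2 := by
    rw [hxpt, hF]
  rw [hevalx, Fin.sum_univ_three]
  rw [show ((0:Fin 3) + 1) = 1 from rfl, show ((0:Fin 3) + 2) = 2 from rfl,
    show ((1:Fin 3) + 1) = 2 from rfl, show ((1:Fin 3) + 2) = 0 from rfl,
    show ((2:Fin 3) + 1) = 0 from rfl, show ((2:Fin 3) + 2) = 1 from rfl]
  rw [hv0, hv1, hv2, hlam 0, hlam 1, hlam 2]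
  have hw1 : wts 0 = 1 - wts 1 - wts 2 := by
    have := hwts
    rw [Fin.sum_univ_three] at this
    linarith
  rw [hw1]
  set s := wts 1
  set t := wts 2
  have hd : d = -3 * a - 3 / 2 * b := by linarith
  have hf : f = -3 * a - 3 / 2 * c := by linarith
  have he : e = 6 * a := by linarith
  rw [he, hd, hf]
  ring
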